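/- Suppose A is a consistent propagation closure for a Horn formula h (i.e., the least set of forced signed literals, containing no contradictory pair). Define the assignment v by v(x) = true if (x, true) ∈ A and v(x) = false otherwise. Then v satisfies every clause of h. -/
import Mathlib


/-- A Horn formula: a set of clauses `(l₁, l₂, l₃)` standing for `¬l₁ ∨ ¬l₂ ∨ l₃`, over
variables `V` including distinguished symbols for `⊤` and `⊥`. -/
structure HornSystem (V : Type) where
  vtop : V
  vbot : V
  clauses : Set (V × V × V)

/-- A clause `¬l₁ ∨ ¬l₂ ∨ l₃` is satisfied by an assignment. -/
def ClauseSat {V : Type} (v : V → Bool) (c : V × V × V) : Prop :=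
  v c.1 = false ∨ v c.2.1 = false ∨ v c.2.2 = true

/-- An assignment satisfies the Horn formula: `⊤` is true, `⊥` is false, and every clause
holds. -/
def HornSat {V : Type} (h : HornSystem V) (v : V → Bool) : Prop :=
  v h.vtop = true ∧ v h.vbot = false ∧ ∀ c ∈ h.clauses, ClauseSat v c

/-- A set of signed literals contains the initially forced assignments and is closed
under unit propagation: whenever two of the three literal assignments of a clause that
fail to satisfy it are present, the forced assignment of the third literal is present. -/
def PropClosed {V : Type} (h : HornSystem V) (A : Set (V × Bool)) : Prop :=
  (h.vtop, true) ∈ A ∧ (h.vbot, false) ∈ A ∧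
  ∀ c ∈ h.clauses,
    ((c.1, true) ∈ A → (c.2.1, true) ∈ A → (c.2.2, true) ∈ A) ∧
    ((c.1, true) ∈ A → (c.2.2, false) ∈ A → (c.2.1, false) ∈ A) ∧
    ((c.2.1, true) ∈ A → (c.2.2, false) ∈ A → (c.1, false) ∈ A)

/-- The least propagation-closed set of signed literals. -/
def HornClosure {V : Type} (h : HornSystem V) : Set (V × Bool) :=
  ⋂₀ {A : Set (V × Bool) | PropClosed h A}

/-- If the propagation closure `A` of a Horn formula is consistent, then the assignment
`v x = true ↔ (x, true) ∈ A` satisfies every clause of the formula. -/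
theorem horn_closure_assignment_satisfies {V : Type} (h : HornSystem V)
    (hcons : ∀ x : V, ¬ ((x, true) ∈ HornClosure h ∧ (x, false) ∈ HornClosure h))
    (v : V → Bool) (hv : ∀ x, v x = true ↔ (x, true) ∈ HornClosure h) :
    ∀ c ∈ h.clauses, ClauseSat v c := by
  have hclosed : PropClosed h (HornClosure h) := by
    refine ⟨?_, ?_, ?_⟩
    · intro A hA; exact hA.1
    · intro A hA; exact hA.2.1
    · intro c hc
      refine ⟨?_, ?_, ?_⟩ <;> intro h1 h2 A hA
      · exact ((hA.2.2 c hc).1 (h1 A hA) (h2 A hA))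
      · exact ((hA.2.2 c hc).2.1 (h1 A hA) (h2 A hA))
      · exact ((hA.2.2 c hc).2.2 (h1 A hA) (h2 A hA))
  intro c hc
  unfold ClauseSat
  by_cases h1 : v c.1 = false
  · exact Or.inl h1
  by_cases h2 : v c.2.1 = false
  · exact Or.inr (Or.inl h2)
  refine Or.inr (Or.inr ?_)
  rw [hv]
  exact (hclosed.2.2 c hc).1 ((hv _).mp (by simpa using h1)) ((hv _).mp (by simpa using h2))
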